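/- arXiv:1510.01657 — 2 statements merged into one kernel-verified Lean document; each statement's English description precedes it below -/
import Mathlib

section
/- Hermite reciprocity in one variable: for all nonnegative integers p and q, the complete homogeneous symmetric polynomial satisfies h_p(1, t, t^2, ..., t^q) = h_q(1, t, t^2, ..., t^p) as polynomials in t. -/
/-- The complete homogeneous symmetric evaluation `h_n(θ_0, …, θ_{k-1})`:
the sum of all monomials of total degree `n` in the values `θ i`. -/
noncomputable def hfull {R : Type*} [CommSemiring R] (k n : ℕ) (θ : Fin k → R) : R :=
  ∑ f ∈ Finset.Nat.antidiagonalTuple k n, ∏ i, θ i ^ f i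


lemma hfull_zero {R : Type*} [CommSemiring R] (k : ℕ) (θ : Fin k → R) :
    hfull k 0 θ = 1 := by
  simp [hfull, Finset.Nat.antidiagonalTuple_zero_right]

lemma hfull_one_var {R : Type*} [CommSemiring R] (n : ℕ) (θ : Fin 1 → R) :
    hfull 1 n θ = θ 0 ^ n := by
  simp [hfull, Finset.Nat.antidiagonalTuple_one]

lemma hfull_cons {R : Type*} [CommSemiring R] (k n : ℕ) (θ : Fin (k + 1) → R) :
    hfull (k + 1) n θ =
      ∑ ab ∈ Finset.HasAntidiagonal.antidiagonal n, θ 0 ^ ab.1 * hfull k ab.2 (θ ∘ Fin.succ) := by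
  unfold hfull
  simp_rw [Finset.mul_sum]
  rw [Finset.sum_sigma']
  refine Finset.sum_nbij'
    (fun f => (⟨(f 0, ∑ i, f (Fin.succ i)), f ∘ Fin.succ⟩ : (_ : ℕ × ℕ) × (Fin k → ℕ)))
    (fun x => Fin.cons x.1.1 x.2) ?_ ?_ ?_ ?_ ?_
  · intro f h
    simp only [Finset.Nat.mem_antidiagonalTuple] at h
    simp only [Finset.mem_sigma, Finset.HasAntidiagonal.mem_antidiagonal, Finset.Nat.mem_antidiagonalTuple]
    exact ⟨by rw [← h, Fin.sum_univ_succ], rfl⟩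
  · rintro ⟨⟨a, b⟩, f⟩ h
    simp only [Finset.mem_sigma, Finset.HasAntidiagonal.mem_antidiagonal, Finset.Nat.mem_antidiagonalTuple] at h ⊢
    rw [Fin.sum_cons, h.2, h.1]
  · intro f _
    exact Fin.cons_self_tail f
  · rintro ⟨⟨a, b⟩, f⟩ h
    simp only [Finset.mem_sigma, Finset.HasAntidiagonal.mem_antidiagonal,
      Finset.Nat.mem_antidiagonalTuple] at h
    have h1 : Fin.cons a f ∘ Fin.succ = f := funext fun i => Fin.cons_succ (α := fun _ => ℕ) a f i
    simp [h.2, h1]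
  · intro f _
    rw [Fin.prod_univ_succ]
    rfl

lemma hfull_snoc {R : Type*} [CommSemiring R] (k n : ℕ) (θ : Fin (k + 1) → R) :
    hfull (k + 1) n θ =
      ∑ ab ∈ Finset.HasAntidiagonal.antidiagonal n,
        hfull k ab.1 (θ ∘ Fin.castSucc) * θ (Fin.last k) ^ ab.2 := by
  unfold hfull
  simp_rw [Finset.sum_mul]
  rw [Finset.sum_sigma']
  refine Finset.sum_nbij'
    (fun f => (⟨(∑ i, f (Fin.castSucc i), f (Fin.last k)), f ∘ Fin.castSucc⟩ :
      (_ : ℕ × ℕ) × (Fin k → ℕ)))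
    (fun x => Fin.snoc x.2 x.1.2) ?_ ?_ ?_ ?_ ?_
  · intro f h
    simp only [Finset.Nat.mem_antidiagonalTuple] at h
    simp only [Finset.mem_sigma, Finset.HasAntidiagonal.mem_antidiagonal, Finset.Nat.mem_antidiagonalTuple]
    exact ⟨by rw [← h, Fin.sum_univ_castSucc], rfl⟩
  · rintro ⟨⟨a, b⟩, f⟩ h
    simp only [Finset.mem_sigma, Finset.HasAntidiagonal.mem_antidiagonal, Finset.Nat.mem_antidiagonalTuple] at h ⊢
    rw [Fin.sum_univ_castSucc]
    simp [h.2, h.1]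
  · intro f _
    exact Fin.snoc_init_self f
  · rintro ⟨⟨a, b⟩, f⟩ h
    simp only [Finset.mem_sigma, Finset.HasAntidiagonal.mem_antidiagonal,
      Finset.Nat.mem_antidiagonalTuple] at h
    have h1 : Fin.snoc f b ∘ Fin.castSucc = f := funext fun i => Fin.snoc_castSucc (α := fun _ => ℕ) b f i
    simp [h.2, h1]
  · intro f _
    rw [Fin.prod_univ_castSucc]
    simp

lemma hfull_mul_left {R : Type*} [CommSemiring R] (k n : ℕ) (c : R) (θ : Fin k → R) :
    hfull k n (fun i => c * θ i) = c ^ n * hfull k n θ := by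
  unfold hfull
  rw [Finset.mul_sum]
  refine Finset.sum_congr rfl fun f hf => ?_
  rw [Finset.Nat.mem_antidiagonalTuple] at hf
  simp_rw [mul_pow, Finset.prod_mul_distrib, Finset.prod_pow_eq_pow_sum, hf]


open Polynomial in
noncomputable def Ff (p q : ℕ) : Polynomial ℤ :=
  hfull (q + 1) p (fun i : Fin (q + 1) => (X : Polynomial ℤ) ^ (i : ℕ))

open Polynomial

lemma Ff_zero_left (q : ℕ) : Ff 0 q = 1 := hfull_zero _ _

lemma Ff_zero_right (p : ℕ) : Ff p 0 = 1 := by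
  rw [Ff, hfull_one_var]; simp

lemma snocX (q m : ℕ) :
    Ff m (q + 1) =
      ∑ ab ∈ Finset.HasAntidiagonal.antidiagonal m, Ff ab.1 q * (X ^ (q + 1) : Polynomial ℤ) ^ ab.2 := by
  rw [Ff, show q + 1 + 1 = q + 2 from rfl, hfull_snoc]
  have hc : ((fun i : Fin (q + 2) => (X : Polynomial ℤ) ^ (i : ℕ)) ∘ Fin.castSucc)
      = fun i : Fin (q + 1) => (X : Polynomial ℤ) ^ (i : ℕ) := by
    funext i; simp
  have hl : (fun i : Fin (q + 2) => (X : Polynomial ℤ) ^ (i : ℕ)) (Fin.last (q + 1))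
      = X ^ (q + 1) := by simp
  simp only [hc, hl]
  rfl

lemma consX (q m : ℕ) :
    Ff m (q + 1) =
      ∑ ab ∈ Finset.HasAntidiagonal.antidiagonal m, (X : Polynomial ℤ) ^ ab.2 * Ff ab.2 q := by
  rw [Ff, show q + 1 + 1 = q + 2 from rfl, hfull_cons]
  refine Finset.sum_congr rfl fun ab _ => ?_
  have h1 : ((fun i : Fin (q + 2) => (X : Polynomial ℤ) ^ (i : ℕ)) ∘ Fin.succ)
      = fun i : Fin (q + 1) => X * (X : Polynomial ℤ) ^ (i : ℕ) := by
    funext i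
    simp [Fin.val_succ, pow_succ, mul_comm]
  rw [h1, hfull_mul_left, ← Ff]
  simp

lemma recA (p q : ℕ) :
    Ff (p + 1) (q + 1) = Ff (p + 1) q + X ^ (q + 1) * Ff p (q + 1) := by
  rw [snocX q (p + 1), Finset.Nat.antidiagonal_succ', Finset.sum_cons, Finset.sum_map,
    snocX q p, Finset.mul_sum]
  refine congrArg₂ (· + ·) ?_ ?_
  · simp
  · refine Finset.sum_congr rfl fun ab _ => ?_
    simp [pow_succ, mul_comm, mul_assoc, mul_left_comm]

lemma recB (p q : ℕ) :
    Ff (p + 1) (q + 1) = X ^ (p + 1) * Ff (p + 1) q + Ff p (q + 1) := by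
  rw [consX q (p + 1), Finset.Nat.antidiagonal_succ, Finset.sum_cons, Finset.sum_map,
    consX q p]
  simp

lemma Ff_symm : ∀ n p q : ℕ, p + q = n → Ff p q = Ff q p := by
  intro n
  induction n using Nat.strong_induction_on with
  | _ n ih =>
    intro p q h
    match p, q with
    | 0, q => rw [Ff_zero_left, Ff_zero_right]
    | p + 1, 0 => rw [Ff_zero_left, Ff_zero_right]
    | p + 1, q + 1 =>
      rw [recA p q, recB q p,
        ih (p + 1 + q) (by omega) (p + 1) q rfl,
        ih (p + (q + 1)) (by omega) p (q + 1) rfl, add_comm]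

/-- Hermite reciprocity in one variable:
`h_p(1, t, t^2, …, t^q) = h_q(1, t, t^2, …, t^p)` in `ℤ[t]`. -/
theorem hermite_reciprocity_one_var (p q : ℕ) :
    hfull (q + 1) p (fun i => (Polynomial.X : Polynomial ℤ) ^ (i : ℕ)) =
    hfull (p + 1) q (fun i => (Polynomial.X : Polynomial ℤ) ^ (i : ℕ)) := by
  exact Ff_symm (p + q) p q rfl
end

section
/- Two-step reciprocity (n=1 even case): for positive integers u, v, z, the SL(2,ℂ)-characters agree: s_λ(x^{w}, ..., x^{-w}) for (λ, w+1) = ((v+z, v)-shape with multiplicities: λ = ((v+z)^v, v^u), w+1 = u+v+z) equals the corresponding character for λ' = ((u+v)^v, v^z) with w'+1 = v+2z. Concretely, P^{u+v+z-1}_{((v+z)^v, v^u)}(q) = P^{v+2z-1}_{((u+v)^v, v^z)}(q). -/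
/-- The transpose (conjugate) partition: `λᵗ_j = #{i < N : λ_i > j}` (0-indexed),
for a partition `l` supported on indices `< N`. -/
def conj (l : ℕ → ℕ) (N : ℕ) : ℕ → ℕ := fun j => ((Finset.range N).filter fun i => j < l i).card

/-- The boxes `(i, j)` (0-indexed) of the Young diagram of `l` (with `l` antitone
and supported on indices `< N`, so all columns are `< l 0`). -/
def boxes (l : ℕ → ℕ) (N : ℕ) : Finset (ℕ × ℕ) :=
  (Finset.range N ×ˢ Finset.range (l 0)).filter fun p => p.2 < l p.1

/-- The hook length of the (0-indexed) box `(i, j)`: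
`(λ_i - 1 - j) + (λᵗ_j - 1 - i) + 1`. -/
def hook (l : ℕ → ℕ) (N i j : ℕ) : ℕ := (l i - 1 - j) + (conj l N j - 1 - i) + 1

/-- The `q`-analog `[a]_t = 1 + t + ⋯ + t^{a-1}`, evaluated at `t ∈ ℚ(q)`. -/
noncomputable def qv (t : RatFunc ℚ) (a : ℕ) : RatFunc ℚ := ∑ i ∈ Finset.range a, t ^ i

/-- `|λ| = Σ λ_i`, the size of the partition. -/
def psize (l : ℕ → ℕ) (N : ℕ) : ℕ := ∑ i ∈ Finset.range N, l i

/-- `b(λ) = Σ_i (i-1)λ_i` (1-indexed), i.e. `Σ_i i·λ_i` with 0-indexing. -/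
def bsum (l : ℕ → ℕ) (N : ℕ) : ℕ := ∑ i ∈ Finset.range N, i * l i

/-- The hook-content ratio `P^d_λ(t) = ∏_{u∈Y(λ)} [d+1+c(u)]_t / ∏_{u∈Y(λ)} [h(u)]_t`,
where `c(i,j) = j - i` is the content (so `d+1+c(u) = d+1+j-i` in `ℕ`), evaluated
at `t ∈ ℚ(q)`. -/
noncomputable def Pt (l : ℕ → ℕ) (N d : ℕ) (t : RatFunc ℚ) : RatFunc ℚ :=
  (∏ p ∈ boxes l N, qv t (d + 1 + p.2 - p.1)) /
  (∏ p ∈ boxes l N, qv t (hook l N p.1 p.2))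

/-- `P^d_λ(q)` as a rational function in `q`. -/
noncomputable def Pq (l : ℕ → ℕ) (N d : ℕ) : RatFunc ℚ := Pt l N d RatFunc.X

/-- The two-step staircase partition `(a^p, b^r)`: `p` parts equal to `a`
followed by `r` parts equal to `b` (with `a ≥ b`). -/
def twostep (a : ℕ) (p : ℕ) (b : ℕ) (r : ℕ) : ℕ → ℕ :=
  fun i => if i < p then a else if i < p + r then b else 0

lemma mem_boxes {l : ℕ → ℕ} {N : ℕ} {p : ℕ × ℕ} :
    p ∈ boxes l N ↔ p.1 < N ∧ p.2 < l 0 ∧ p.2 < l p.1 := by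
  simp [boxes, Finset.mem_filter, Finset.mem_product, Finset.mem_range, and_assoc]

lemma conj_twostep (a p b r : ℕ) (hba : b ≤ a) (j : ℕ) :
    conj (twostep a p b r) (p + r) j = if j < b then p + r else if j < a then p else 0 := by
  unfold conj twostep
  have : ((Finset.range (p + r)).filter fun i =>
      j < if i < p then a else if i < p + r then b else 0) =
      Finset.range (if j < b then p + r else if j < a then p else 0) := by
    ext i
    simp only [Finset.mem_filter, Finset.mem_range]
    split_ifs <;> omega
  rw [this, Finset.card_range]

/-- The content product of `((v+c)^v, v^r)` with shift `D` (where `D ≥ v+r-1`) equals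
a rectangular product. -/
lemma content_prod (v c r D : ℕ) (hD : v + r ≤ D + 1) :
    (∏ p ∈ boxes (twostep (v + c) v v r) (v + r), qv RatFunc.X (D + p.2 - p.1)) =
    ∏ q ∈ Finset.range v ×ˢ Finset.range (r + v + c),
      qv RatFunc.X ((D + 1 - r - v) + q.1 + q.2) := by
  have hl : ∀ i, twostep (v + c) v v r i = if i < v then v + c else if i < v + r then v else 0 :=
    fun i => rfl
  refine Finset.prod_nbij'
      (fun p => if p.1 < v then (v - 1 - p.1, r + p.2) else (p.2, r + v - 1 - p.1))
      (fun q => if r ≤ q.2 then (v - 1 - q.1, q.2 - r) else (r + v - 1 - q.2, q.1))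
      ?_ ?_ ?_ ?_ ?_
  · rintro ⟨i, j⟩ hp
    simp only [mem_boxes, hl] at hp
    simp only [Finset.mem_product, Finset.mem_range]
    split_ifs at hp ⊢ <;> simp_all <;> omega
  · rintro ⟨a, b⟩ hq
    simp only [Finset.mem_product, Finset.mem_range] at hq
    simp only [mem_boxes, hl]
    split_ifs <;> simp_all <;> omega
  · rintro ⟨i, j⟩ hp
    simp only [mem_boxes, hl] at hp
    have hp' : i < v + r ∧ j < v + c ∧ (i < v ∨ j < v) := by split_ifs at hp <;> omega
    dsimp only
    by_cases h : i < v
    · rw [if_pos h]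
      dsimp only
      rw [if_pos (by omega : r ≤ r + j)]
      rw [Prod.mk.injEq]
      omega
    · rw [if_neg h]
      dsimp only
      rw [if_neg (by omega : ¬ r ≤ r + v - 1 - i)]
      rw [Prod.mk.injEq]
      omega
  · rintro ⟨a, b⟩ hq
    simp only [Finset.mem_product, Finset.mem_range] at hq
    dsimp only
    by_cases h : r ≤ b
    · rw [if_pos h]
      dsimp only
      rw [if_pos (by omega : v - 1 - a < v)]
      rw [Prod.mk.injEq]
      omega
    · rw [if_neg h]
      dsimp only
      rw [if_neg (by omega : ¬ r + v - 1 - b < v)]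
      rw [Prod.mk.injEq]
      omega
  · rintro ⟨i, j⟩ hp
    simp only [mem_boxes, hl] at hp
    have hp' : i < v + r ∧ j < v + c ∧ (i < v ∨ j < v) := by split_ifs at hp <;> omega
    dsimp only
    by_cases h : i < v
    · rw [if_pos h]
      dsimp only
      congr 1
      omega
    · rw [if_neg h]
      dsimp only
      congr 1
      omega

/-- Two-step reciprocity (n = 1, even case): for positive integers `u, v, z`,
`P^{u+v+z-1}_{((v+z)^v, v^u)}(q) = P^{v+2z-1}_{((u+v)^v, v^z)}(q)`. -/
theorem twostep_reciprocity (u v z : ℕ) (hu : 0 < u) (hv : 0 < v) (hz : 0 < z) :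
    Pq (twostep (v + z) v v u) (v + u) (u + v + z - 1) =
    Pq (twostep (u + v) v v z) (v + z) (v + 2 * z - 1) := by
  have hl1v : ∀ i, twostep (v + z) v v u i
      = if i < v then v + z else if i < v + u then v else 0 := fun i => rfl
  have hl2v : ∀ i, twostep (u + v) v v z i
      = if i < v then u + v else if i < v + z then v else 0 := fun i => rfl
  have hc1 : ∀ j, conj (twostep (v + z) v v u) (v + u) j = twostep (u + v) v v z j := by
    intro j
    rw [conj_twostep (v + z) v v u (by omega) j, hl2v]
    split_ifs <;> omega
  have hc2 : ∀ j, conj (twostep (u + v) v v z) (v + z) j = twostep (v + z) v v u j := by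
    intro j
    rw [conj_twostep (u + v) v v z (by omega) j, hl1v]
    split_ifs <;> omega
  unfold Pq Pt
  congr 1
  · -- numerators
    have e1 := content_prod v z u (u + v + z) (by omega)
    have e2 := content_prod v u z (v + 2 * z) (by omega)
    calc (∏ p ∈ boxes (twostep (v + z) v v u) (v + u),
            qv RatFunc.X (u + v + z - 1 + 1 + p.2 - p.1))
        = ∏ p ∈ boxes (twostep (v + z) v v u) (v + u),
            qv RatFunc.X (u + v + z + p.2 - p.1) := by
          refine Finset.prod_congr rfl fun p hp => ?_
          congr 1; omega
      _ = ∏ q ∈ Finset.range v ×ˢ Finset.range (u + v + z),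
            qv RatFunc.X ((u + v + z + 1 - u - v) + q.1 + q.2) := e1
      _ = ∏ q ∈ Finset.range v ×ˢ Finset.range (z + v + u),
            qv RatFunc.X ((v + 2 * z + 1 - z - v) + q.1 + q.2) := by
          rw [show u + v + z + 1 - u - v = v + 2 * z + 1 - z - v by omega,
              show u + v + z = z + v + u by omega]
      _ = ∏ p ∈ boxes (twostep (v + u) v v z) (v + z),
            qv RatFunc.X (v + 2 * z + p.2 - p.1) := e2.symm
      _ = ∏ p ∈ boxes (twostep (u + v) v v z) (v + z),
            qv RatFunc.X (v + 2 * z - 1 + 1 + p.2 - p.1) := by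
          rw [show v + u = u + v by omega]
          refine Finset.prod_congr rfl fun p hp => ?_
          congr 1; omega
  · -- denominators via conjugation (swap)
    refine Finset.prod_nbij' Prod.swap Prod.swap ?_ ?_ ?_ ?_ ?_
    · rintro ⟨i, j⟩ hp
      simp only [mem_boxes, hl1v] at hp
      simp only [mem_boxes, hl2v, Prod.swap]
      split_ifs at hp ⊢ <;> omega
    · rintro ⟨i, j⟩ hp
      simp only [mem_boxes, hl2v] at hp
      simp only [mem_boxes, hl1v, Prod.swap]
      split_ifs at hp ⊢ <;> omega
    · intro p _; exact Prod.swap_swap p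
    · intro p _; exact Prod.swap_swap p
    · rintro ⟨i, j⟩ _
      unfold hook
      rw [hc1, hc2]
      dsimp only [Prod.swap]
      ac_rfl
end
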